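/- arXiv:2504.07456 — 2 statements merged into one kernel-verified Lean document; each statement's English description precedes it below -/
import Mathlib

section
/- For every n ≥ 1, the set W_n of new fractions inserted at step n of the Stern-Brocot construction equals the set of rationals ξ = [0; a_1, a_2, ..., a_t] in [0,1] (finite continued fraction with positive integer partial quotients and a_t ≥ 2) such that a_1 + a_2 + ... + a_t = n + 1. -/
/-- The mediant of two rationals, formed from numerators and denominators
of the reduced fractions. -/
def mediant (a b : ℚ) : ℚ := ((a.num + b.num : ℤ) : ℚ) / ((a.den + b.den : ℕ) : ℚ)

/-- `sb n j` is the `j`-th element `ξ_{j,n}` of the Stern–Brocot sequence `F_n`: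
`F_0 = {0/1, 1/1}` and `F_{n+1}` is obtained from `F_n` by inserting the mediant
between every pair of consecutive elements. -/
def sb : ℕ → ℕ → ℚ
  | 0, j => if j = 0 then 0 else 1
  | n + 1, j => if j % 2 = 0 then sb n (j / 2) else mediant (sb n (j / 2)) (sb n (j / 2 + 1))

/-- `sbNew n` is the set `W_n` of new fractions inserted at step `n` of the
Stern–Brocot construction (the elements of odd index in `F_n`). -/
def sbNew (n : ℕ) : Finset ℚ :=
  ((Finset.range (2 ^ n)).filter (fun j => j % 2 = 1)).image (sb n)

/-- The value of the finite continued fraction `[0; a_1, ..., a_t]` given by the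
list `[a_1, ..., a_t]`. -/
def cfVal : List ℕ → ℚ
  | [] => 0
  | a :: l => 1 / ((a : ℚ) + cfVal l)










section aux

lemma coprime_int {a b : ℤ} (h : IsCoprime a b) : Nat.Coprime a.natAbs b.natAbs :=
  Int.isCoprime_iff_gcd_eq_one.mp h

lemma rat_cop (x : ℚ) : IsCoprime x.num (x.den : ℤ) :=
  Int.isCoprime_iff_gcd_eq_one.mpr x.reduced

lemma num_den_one_sub (x : ℚ) :
    (1 - x).num = (x.den : ℤ) - x.num ∧ ((1 - x).den : ℤ) = (x.den : ℤ) := by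
  have hd : (0:ℤ) < (x.den : ℤ) := mod_cast x.pos
  have hcop : Nat.Coprime ((x.den : ℤ) - x.num).natAbs (x.den : ℤ).natAbs := by
    apply coprime_int
    have := ((rat_cop x).neg_left).add_mul_left_left 1
    simpa [mul_one, add_comm, sub_eq_add_neg] using this
  have hval : (1 - x) = (((x.den : ℤ) - x.num : ℤ) : ℚ) / ((x.den : ℤ) : ℚ) := by
    have h0 : ((x.den : ℕ) : ℚ) ≠ 0 := by positivity
    push_cast
    rw [sub_div, div_self h0, Rat.num_div_den]
  constructor
  · rw [hval]; exact Rat.num_div_eq_of_coprime hd hcop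
  · rw [hval]; exact Rat.den_div_eq_of_coprime hd hcop

end aux

def phi (x : ℚ) : ℚ := x / (1 + x)
def psi (x : ℚ) : ℚ := 1 / (1 + x)

lemma num_den_phi (x : ℚ) (hx : 0 ≤ x) :
    (phi x).num = x.num ∧ ((phi x).den : ℤ) = x.num + x.den := by
  have hnum : 0 ≤ x.num := Rat.num_nonneg.mpr hx
  have hdpos : 0 < x.den := x.pos
  have hd : (0:ℤ) < x.num + (x.den : ℤ) := by omega
  have hcop : Nat.Coprime x.num.natAbs (x.num + (x.den:ℤ)).natAbs := by
    apply coprime_int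
    have := (rat_cop x).add_mul_left_right 1
    simpa [mul_one, add_comm] using this
  have h0 : ((x.den : ℕ) : ℚ) ≠ 0 := by positivity
  have key : x * (x.den : ℚ) = (x.num : ℚ) := Rat.mul_den_eq_num x
  have h1 : (1:ℚ) + x ≠ 0 := by positivity
  have hsum : ((x.num : ℚ) + (x.den : ℚ)) ≠ 0 := by
    have : (0:ℚ) ≤ (x.num : ℚ) := by exact_mod_cast hnum
    have : (0:ℚ) < (x.den : ℚ) := by exact_mod_cast hdpos
    positivity
  have hsum2 : ((x.num + (x.den:ℤ) : ℤ) : ℚ) ≠ 0 := by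
    push_cast
    exact hsum
  have hval : phi x = ((x.num + (x.den:ℤ) : ℤ) : ℚ)⁻¹ * (x.num : ℚ) := by
    rw [phi, eq_comm, inv_mul_eq_div, div_eq_div_iff hsum2 h1]
    push_cast
    linear_combination -key
  rw [hval, inv_mul_eq_div]
  exact ⟨Rat.num_div_eq_of_coprime hd hcop, Rat.den_div_eq_of_coprime hd hcop⟩

lemma mediant_phi (a b : ℚ) (ha : 0 ≤ a) (hb : 0 ≤ b) :
    mediant (phi a) (phi b) = phi (mediant a b) := by
  obtain ⟨na, da⟩ := num_den_phi a ha
  obtain ⟨nb, db⟩ := num_den_phi b hb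
  have hA : (0:ℚ) ≤ (a.num : ℚ) := by exact_mod_cast Rat.num_nonneg.mpr ha
  have hB : (0:ℚ) ≤ (b.num : ℚ) := by exact_mod_cast Rat.num_nonneg.mpr hb
  have hα : (0:ℚ) < (a.den : ℚ) := by exact_mod_cast a.pos
  have hβ : (0:ℚ) < (b.den : ℚ) := by exact_mod_cast b.pos
  have e2 : ((phi a).den : ℚ) = (a.num : ℚ) + (a.den : ℚ) := by exact_mod_cast da
  have e4 : ((phi b).den : ℚ) = (b.num : ℚ) + (b.den : ℚ) := by exact_mod_cast db
  have lhs_eq : mediant (phi a) (phi b)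
      = ((a.num:ℚ)+(b.num:ℚ))/(((a.num:ℚ)+(a.den:ℚ))+((b.num:ℚ)+(b.den:ℚ))) := by
    rw [mediant]
    push_cast
    rw [na, nb, e2, e4]
  rw [lhs_eq, mediant, phi]
  push_cast
  have h1 : (a.den : ℚ) + (b.den : ℚ) ≠ 0 := by positivity
  have h2 : (a.num : ℚ) + (a.den:ℚ) + ((b.num:ℚ) + (b.den:ℚ)) ≠ 0 := by positivity
  have h3 : (1:ℚ) + ((a.num:ℚ) + (b.num:ℚ))/((a.den:ℚ)+(b.den:ℚ)) ≠ 0 := by positivity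
  field_simp
  ring_nf
  try exact Or.inl trivial

lemma mediant_one_sub (a b : ℚ) :
    mediant (1-b) (1-a) = 1 - mediant a b := by
  obtain ⟨nb, db⟩ := num_den_one_sub b
  obtain ⟨na, da⟩ := num_den_one_sub a
  have e2 : ((1-b).den : ℚ) = (b.den : ℚ) := by exact_mod_cast db
  have e4 : ((1-a).den : ℚ) = (a.den : ℚ) := by exact_mod_cast da
  have hα : (0:ℚ) < (a.den : ℚ) := by exact_mod_cast a.pos
  have hβ : (0:ℚ) < (b.den : ℚ) := by exact_mod_cast b.pos
  have lhs_eq : mediant (1-b) (1-a)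
      = (((b.den:ℚ)-(b.num:ℚ))+((a.den:ℚ)-(a.num:ℚ)))/((b.den:ℚ)+(a.den:ℚ)) := by
    rw [mediant]
    push_cast
    rw [nb, na, e2, e4]
    push_cast
    ring_nf
  rw [lhs_eq, mediant]
  push_cast
  have h1 : (b.den : ℚ) + (a.den : ℚ) ≠ 0 := by positivity
  have h2 : (a.den : ℚ) + (b.den : ℚ) ≠ 0 := by positivity
  field_simp
  ring

lemma sb_even (n k : ℕ) : sb (n+1) (2*k) = sb n k := by
  rw [sb]
  simp [Nat.mul_mod_right, Nat.mul_div_cancel_left]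

lemma sb_odd (n k : ℕ) : sb (n+1) (2*k+1) = mediant (sb n k) (sb n (k+1)) := by
  rw [sb]
  have h1 : (2*k+1) % 2 = 1 := by omega
  have h2 : (2*k+1) / 2 = k := by omega
  rw [h1, h2]
  norm_num

lemma num_le_den (a : ℚ) (ha : a ≤ 1) : (a.num : ℚ) ≤ (a.den : ℚ) := by
  rw [← Rat.mul_den_eq_num]
  have : (0:ℚ) ≤ (a.den : ℚ) := by positivity
  nlinarith

lemma mediant_mem01 (a b : ℚ) (ha : 0 ≤ a) (ha1 : a ≤ 1) (hb : 0 ≤ b) (hb1 : b ≤ 1) :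
    0 ≤ mediant a b ∧ mediant a b ≤ 1 := by
  have hA : (0:ℚ) ≤ (a.num : ℚ) := by exact_mod_cast Rat.num_nonneg.mpr ha
  have hB : (0:ℚ) ≤ (b.num : ℚ) := by exact_mod_cast Rat.num_nonneg.mpr hb
  have hα : (0:ℚ) < (a.den : ℚ) := by exact_mod_cast a.pos
  have hβ : (0:ℚ) < (b.den : ℚ) := by exact_mod_cast b.pos
  have h1 := num_le_den a ha1
  have h2 := num_le_den b hb1
  rw [mediant]
  constructor
  · apply div_nonneg
    · push_cast; linarith
    · push_cast; linarith
  · rw [div_le_one (by push_cast; linarith)]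
    push_cast
    linarith

lemma sb_mem01 (n : ℕ) : ∀ j, 0 ≤ sb n j ∧ sb n j ≤ 1 := by
  induction n with
  | zero =>
    intro j
    rw [sb]
    split <;> norm_num
  | succ n ih =>
    intro j
    rw [sb]
    split
    · exact ih _
    · obtain ⟨h1, h2⟩ := ih (j/2)
      obtain ⟨h3, h4⟩ := ih (j/2+1)
      exact mediant_mem01 _ _ h1 h2 h3 h4

lemma sb_symm (n : ℕ) : ∀ j ≤ 2^n, sb n (2^n - j) = 1 - sb n j := by
  induction n with
  | zero =>
    intro j hj
    interval_cases j <;> simp [sb]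
  | succ n ih =>
    intro j hj
    have hp : 2^(n+1) = 2*2^n := by ring
    rcases Nat.even_or_odd j with ⟨k, hk⟩ | ⟨k, hk⟩
    · have hk2 : k ≤ 2^n := by omega
      have e : 2^(n+1) - j = 2*(2^n - k) := by omega
      have e2 : j = 2*k := by omega
      rw [e, e2, sb_even, sb_even]
      exact ih k hk2
    · have hk2 : k + 1 ≤ 2^n := by omega
      have e : 2^(n+1) - j = 2*(2^n - (k+1))+1 := by omega
      have e3 : 2^n - (k+1) + 1 = 2^n - k := by omega
      rw [e, hk, sb_odd, sb_odd, e3, ih (k+1) hk2, ih k (by omega), mediant_one_sub]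

lemma sb_phi (n : ℕ) : ∀ j ≤ 2^n, sb (n+1) j = phi (sb n j) := by
  induction n with
  | zero =>
    intro j hj
    interval_cases j
    · show sb 1 (2*0) = _
      rw [sb_even]
      norm_num [sb, phi]
    · show sb 1 (2*0+1) = _
      rw [sb_odd]
      show mediant 0 1 = phi 1
      norm_num [mediant, phi]
  | succ n ih =>
    intro j hj
    have hp : 2^(n+1) = 2*2^n := by ring
    rcases Nat.even_or_odd j with ⟨k, hk⟩ | ⟨k, hk⟩
    · have e2 : j = 2*k := by omega
      rw [e2, sb_even, sb_even, ih k (by omega)]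
    · have hk1 : k ≤ 2^n := by omega
      have hk2 : k + 1 ≤ 2^n := by omega
      rw [hk, sb_odd, sb_odd, ih k hk1, ih (k+1) hk2,
        mediant_phi _ _ (sb_mem01 n k).1 (sb_mem01 n (k+1)).1]

lemma one_sub_phi (x : ℚ) (hx : 0 ≤ x) : 1 - phi x = psi x := by
  have h : (1:ℚ) + x ≠ 0 := by positivity
  rw [phi, psi]
  field_simp
  ring



lemma mem_sbNew (n : ℕ) (r : ℚ) :
    r ∈ sbNew n ↔ ∃ j, j < 2^n ∧ j % 2 = 1 ∧ sb n j = r := by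
  simp only [sbNew, Finset.mem_image, Finset.mem_filter, Finset.mem_range]
  constructor
  · rintro ⟨j, ⟨h1, h2⟩, h3⟩
    exact ⟨j, h1, h2, h3⟩
  · rintro ⟨j, h1, h2, h3⟩
    exact ⟨j, ⟨h1, h2⟩, h3⟩

lemma sbNew_succ (n : ℕ) (hn : 1 ≤ n) (r : ℚ) :
    r ∈ sbNew (n+1) ↔ ∃ s ∈ sbNew n, r = phi s ∨ r = psi s := by
  have hp : 2^(n+1) = 2*2^n := by ring
  have hev : 2^n % 2 = 0 := by
    obtain ⟨m, hm⟩ : ∃ m, n = m + 1 := ⟨n - 1, by omega⟩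
    have : 2^n = 2*2^m := by rw [hm]; ring
    omega
  constructor
  · rw [mem_sbNew]
    rintro ⟨j, hj, hodd, rfl⟩
    rcases lt_or_ge j (2^n) with h | h
    · refine ⟨sb n j, (mem_sbNew n _).mpr ⟨j, h, hodd, rfl⟩, Or.inl ?_⟩
      rw [sb_phi n j h.le]
    · set j' := 2^(n+1) - j with hj'
      have hj'odd : j' % 2 = 1 := by omega
      have hj'lt : j' < 2^n := by omega
      have hj'le : j' ≤ 2^(n+1) := by omega
      have e : j = 2^(n+1) - j' := by omega
      refine ⟨sb n j', (mem_sbNew n _).mpr ⟨j', hj'lt, hj'odd, rfl⟩, Or.inr ?_⟩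
      rw [e, sb_symm (n+1) j' hj'le, sb_phi n j' hj'lt.le,
        one_sub_phi _ (sb_mem01 n j').1]
  · rintro ⟨s, hs, hcase⟩
    obtain ⟨j, hj, hodd, rfl⟩ := (mem_sbNew n s).mp hs
    rcases hcase with rfl | rfl
    · rw [mem_sbNew]
      exact ⟨j, by omega, hodd, sb_phi n j hj.le⟩
    · rw [mem_sbNew]
      refine ⟨2^(n+1) - j, by omega, by omega, ?_⟩
      rw [sb_symm (n+1) j (by omega), sb_phi n j hj.le,
        one_sub_phi _ (sb_mem01 n j).1]

lemma cf_nonneg : ∀ L : List ℕ, 0 ≤ cfVal L := by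
  intro L
  induction L with
  | nil => simp [cfVal]
  | cons a l ih =>
    rw [cfVal]
    have h1 : (0:ℚ) ≤ (a:ℚ) + cfVal l := add_nonneg (by positivity) ih
    exact div_nonneg zero_le_one h1

lemma phi_cfVal (a : ℕ) (ha : 1 ≤ a) (L : List ℕ) :
    phi (cfVal (a :: L)) = cfVal ((a+1) :: L) := by
  have hv := cf_nonneg L
  have h1 : (0:ℚ) < (a:ℚ) + cfVal L := by
    have : (1:ℚ) ≤ (a:ℚ) := by exact_mod_cast ha
    linarith
  have h2 : (0:ℚ) < (a:ℚ) + cfVal L + 1 := by linarith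
  rw [phi, cfVal, cfVal]
  push_cast
  rw [div_eq_div_iff (by positivity) (by linarith)]
  field_simp
  ring

lemma psi_cfVal (L : List ℕ) : psi (cfVal L) = cfVal (1 :: L) := by
  rw [psi, cfVal]
  norm_num

lemma getLastD_cons_ne {t : List ℕ} (ht : t ≠ []) (a d : ℕ) :
    (a :: t).getLastD d = t.getLastD d := by
  cases t with
  | nil => exact absurd rfl ht
  | cons b l => simp [List.getLastD_cons]

lemma sum_two (L : List ℕ) (h1 : L ≠ []) (h2 : ∀ a ∈ L, 1 ≤ a)
    (h3 : 2 ≤ L.getLastD 0) (h4 : L.sum = 2) : L = [2] := by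
  match L with
  | [] => exact absurd rfl h1
  | [a] =>
    simp only [List.sum_cons, List.sum_nil, add_zero] at h4
    rw [h4]
  | a :: b :: t =>
    exfalso
    have ha := h2 a (by simp)
    have hb := h2 b (by simp)
    have ht : t = [] := by
      cases t with
      | nil => rfl
      | cons c l =>
        have hc := h2 c (by simp)
        simp only [List.sum_cons] at h4
        have := l.sum
        omega
    subst ht
    simp only [List.sum_cons, List.sum_nil, add_zero] at h4
    have ha1 : a = 1 := by omega
    have hb1 : b = 1 := by omega
    subst ha1; subst hb1
    simp [List.getLastD_cons] at h3

lemma sb_one_one : sb 1 1 = 1/2 := by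
  show sb 1 (2*0+1) = 1/2
  rw [sb_odd]
  show mediant 0 1 = 1/2
  norm_num [mediant]



/-- For every `n ≥ 1`, `W_n` equals the set of rationals `ξ = [0; a_1, ..., a_t]`
(finite continued fraction with positive integer partial quotients and `a_t ≥ 2`)
such that `a_1 + ... + a_t = n + 1`. -/
theorem sbNew_eq_cf_sum (n : ℕ) (hn : 1 ≤ n) (r : ℚ) :
    r ∈ sbNew n ↔
      ∃ L : List ℕ, L ≠ [] ∧ (∀ a ∈ L, 1 ≤ a) ∧ 2 ≤ L.getLastD 0 ∧
        L.sum = n + 1 ∧ r = cfVal L := by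
  induction n, hn using Nat.le_induction generalizing r with
  | base =>
    constructor
    · intro hr
      obtain ⟨j, hj, hodd, hsb⟩ := (mem_sbNew 1 r).mp hr
      have hj1 : j = 1 := by omega
      subst hj1
      refine ⟨[2], by simp, by simp, by simp [List.getLastD_cons], by simp, ?_⟩
      rw [← hsb, sb_one_one, cfVal, cfVal]
      norm_num
    · rintro ⟨L, h1, h2, h3, h4, rfl⟩
      have hL : L = [2] := sum_two L h1 h2 h3 (by omega)
      rw [hL]
      refine (mem_sbNew 1 _).mpr ⟨1, by norm_num, rfl, ?_⟩
      rw [sb_one_one, cfVal, cfVal]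
      norm_num
  | succ n hn ih =>
    rw [sbNew_succ n hn]
    constructor
    · rintro ⟨s, hs, hc⟩
      obtain ⟨L, h1, h2, h3, h4, rfl⟩ := (ih _).mp hs
      rcases hc with rfl | rfl
      · cases L with
        | nil => exact absurd rfl h1
        | cons a L' =>
          have ha : 1 ≤ a := h2 a (by simp)
          refine ⟨(a+1) :: L', by simp, ?_, ?_, ?_, ?_⟩
          · intro x hx
            rcases List.mem_cons.mp hx with rfl | hx'
            · omega
            · exact h2 x (List.mem_cons_of_mem a hx')
          · cases L' with
            | nil => simp [List.getLastD_cons]; omega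
            | cons b t =>
              rw [getLastD_cons_ne (by simp)]
              rw [getLastD_cons_ne (by simp)] at h3
              exact h3
          · simp only [List.sum_cons] at h4 ⊢
            omega
          · rw [phi_cfVal a ha]
      · refine ⟨1 :: L, by simp, ?_, ?_, ?_, (psi_cfVal L).symm⟩
        · intro x hx
          rcases List.mem_cons.mp hx with rfl | hx'
          · omega
          · exact h2 x hx'
        · rw [getLastD_cons_ne h1]
          exact h3
        · simp only [List.sum_cons]
          omega
    · rintro ⟨L, h1, h2, h3, h4, rfl⟩
      cases L with
      | nil => exact absurd rfl h1
      | cons a L' =>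
        have ha : 1 ≤ a := h2 a (by simp)
        simp only [List.sum_cons] at h4
        rcases eq_or_lt_of_le ha with heq | hlt
        · -- a = 1
          have ha1 : a = 1 := heq.symm
          subst ha1
          have hL' : L' ≠ [] := by
            intro hnil
            subst hnil
            simp only [List.sum_nil, add_zero] at h4
            omega
          refine ⟨cfVal L', (ih _).mpr ⟨L', hL', ?_, ?_, by omega, rfl⟩,
            Or.inr (psi_cfVal L').symm⟩
          · intro x hx
            exact h2 x (List.mem_cons_of_mem 1 hx)
          · rw [getLastD_cons_ne hL'] at h3
            exact h3
        · -- 2 ≤ a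
          have ha2 : 2 ≤ a := hlt
          have hsum : (a-1) + L'.sum = n + 1 := by omega
          refine ⟨cfVal ((a-1) :: L'), (ih _).mpr ⟨(a-1) :: L', by simp, ?_, ?_, ?_, rfl⟩,
            Or.inl ?_⟩
          · intro x hx
            rcases List.mem_cons.mp hx with rfl | hx'
            · omega
            · exact h2 x (List.mem_cons_of_mem a hx')
          · cases L' with
            | nil =>
              simp only [List.sum_nil, add_zero] at h4
              simp [List.getLastD_cons]
              omega
            | cons b t =>
              rw [getLastD_cons_ne (by simp)]
              rw [getLastD_cons_ne (by simp)] at h3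
              exact h3
          · simp only [List.sum_cons]
            omega
          · have e : a - 1 + 1 = a := by omega
            rw [phi_cfVal (a-1) (by omega), e]
end

section
/- Let m be the inverse of the Minkowski question mark function and ρ(x) = {x} − 1/2. Then for all n ≥ 1: |∫_0^1 ρ(2^n x)(x − m(x)) dx| ≤ 2^{−n}. -/
open scoped Classical in
/-- The inverse `m` of the Minkowski question mark function, characterized by
`m(j/2^n) = ξ_{j,n}`:  `m(x) = sup { ξ_{j,n} : j/2^n ≤ x }`. -/
noncomputable def minkowskiInv (x : ℝ) : ℝ :=
  sSup {y : ℝ | ∃ n j : ℕ, j ≤ 2 ^ n ∧ ((j : ℝ) / 2 ^ n ≤ x) ∧ y = (sb n j : ℝ)}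

/-- `ρ(x) = {x} − 1/2`, where `{x}` is the fractional part of `x`. -/
noncomputable def rho (x : ℝ) : ℝ := Int.fract x - 1 / 2

open MeasureTheory intervalIntegral

lemma mediant_mem {a b : ℚ} (ha : 0 ≤ a ∧ a ≤ 1) (hb : 0 ≤ b ∧ b ≤ 1) :
    0 ≤ mediant a b ∧ mediant a b ≤ 1 := by
  have hda : (0:ℚ) < (a.den : ℚ) := by exact_mod_cast a.pos
  have hdb : (0:ℚ) < (b.den : ℚ) := by exact_mod_cast b.pos
  have hna : (0:ℚ) ≤ (a.num : ℚ) := by exact_mod_cast (Rat.num_nonneg).2 ha.1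
  have hnb : (0:ℚ) ≤ (b.num : ℚ) := by exact_mod_cast (Rat.num_nonneg).2 hb.1
  have hla : (a.num : ℚ) ≤ (a.den : ℚ) := by
    have := ha.2; rw [← Rat.num_div_den a] at this
    exact (div_le_one hda).1 this
  have hlb : (b.num : ℚ) ≤ (b.den : ℚ) := by
    have := hb.2; rw [← Rat.num_div_den b] at this
    exact (div_le_one hdb).1 this
  unfold mediant
  constructor
  · apply div_nonneg <;> push_cast <;> linarith
  · rw [div_le_one (by push_cast; linarith)]
    push_cast; linarith

lemma sb_mem : ∀ n j, 0 ≤ sb n j ∧ sb n j ≤ 1 := by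
  intro n
  induction n with
  | zero => intro j; by_cases h : j = 0 <;> simp [sb, h]
  | succ n ih =>
    intro j
    by_cases h : j % 2 = 0 <;> simp only [sb, h, if_true, if_false, reduceIte]
    · exact ih _
    · exact mediant_mem (ih _) (ih _)

lemma mink_bdd (x : ℝ) :
    BddAbove {y : ℝ | ∃ n j : ℕ, j ≤ 2 ^ n ∧ ((j : ℝ) / 2 ^ n ≤ x) ∧ y = (sb n j : ℝ)} := by
  refine ⟨1, fun y hy => ?_⟩
  obtain ⟨n, j, _, _, rfl⟩ := hy
  exact_mod_cast (sb_mem n j).2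

lemma mink_le_one (x : ℝ) : minkowskiInv x ≤ 1 := by
  apply Real.sSup_le _ zero_le_one
  rintro y ⟨n, j, _, _, rfl⟩
  exact_mod_cast (sb_mem n j).2

lemma mink_nonneg (x : ℝ) : 0 ≤ minkowskiInv x := by
  by_cases h : {y : ℝ | ∃ n j : ℕ, j ≤ 2 ^ n ∧ ((j : ℝ) / 2 ^ n ≤ x) ∧ y = (sb n j : ℝ)}.Nonempty
  · obtain ⟨y, hy⟩ := h
    have hy' := hy
    obtain ⟨n, j, _, _, rfl⟩ := hy'
    have h0 : (0:ℝ) ≤ (sb n j : ℝ) := by exact_mod_cast (sb_mem n j).1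
    exact h0.trans (le_csSup (mink_bdd x) hy)
  · unfold minkowskiInv
    rw [Set.not_nonempty_iff_eq_empty.1 h, Real.sSup_empty]

lemma mink_mono : Monotone minkowskiInv := by
  intro x y hxy
  by_cases h : {z : ℝ | ∃ n j : ℕ, j ≤ 2 ^ n ∧ ((j : ℝ) / 2 ^ n ≤ x) ∧ z = (sb n j : ℝ)}.Nonempty
  · apply csSup_le_csSup (mink_bdd y) h
    rintro z ⟨n, j, h1, h2, rfl⟩
    exact ⟨n, j, h1, h2.trans hxy, rfl⟩
  · have : minkowskiInv x = 0 := by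
      unfold minkowskiInv
      rw [Set.not_nonempty_iff_eq_empty.1 h, Real.sSup_empty]
    rw [this]; exact mink_nonneg y

lemma rho_meas : Measurable rho := measurable_fract.sub measurable_const

lemma abs_rho_le (x : ℝ) : |rho x| ≤ 1 / 2 := by
  rw [abs_le]
  have h1 := Int.fract_nonneg x
  have h2 := Int.fract_lt_one x
  unfold rho
  constructor <;> linarith

lemma intervalIntegrable_of_bounded {f : ℝ → ℝ} (hm : Measurable f) {a b C : ℝ}
    (h : ∀ x ∈ Set.uIoc a b, |f x| ≤ C) : IntervalIntegrable f volume a b := by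
  rw [intervalIntegrable_iff]
  refine ⟨hm.aestronglyMeasurable.restrict, ?_⟩
  apply HasFiniteIntegral.restrict_of_bounded (C := C) measure_Ioc_lt_top
  apply (ae_restrict_iff' measurableSet_uIoc).2
  exact ae_of_all _ fun x hx => by rw [Real.norm_eq_abs]; exact h x hx

lemma rho_integral_zero (k : ℕ) : ∫ u in (k:ℝ)..((k:ℝ)+1), rho u = 0 := by
  have hnull : ∀ᵐ (u:ℝ), u ≠ (k:ℝ)+1 := by
    rw [MeasureTheory.ae_iff]
    simpa using measure_singleton ((k:ℝ)+1)
  have hcongr : ∫ u in (k:ℝ)..((k:ℝ)+1), rho u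
      = ∫ u in (k:ℝ)..((k:ℝ)+1), (u - (k:ℝ) - 1/2) := by
    apply intervalIntegral.integral_congr_ae
    filter_upwards [hnull] with u hu hmem
    rw [Set.uIoc_of_le (by linarith : (k:ℝ) ≤ (k:ℝ)+1)] at hmem
    obtain ⟨h1, h2⟩ := hmem
    have hlt : u < (k:ℝ) + 1 := lt_of_le_of_ne h2 hu
    have hf : ⌊u⌋ = (k:ℤ) := by
      rw [Int.floor_eq_iff]
      constructor
      · exact_mod_cast h1.le
      · push_cast; linarith
    simp [rho, Int.fract, hf]
  rw [hcongr]
  have : (fun u : ℝ => u - (k:ℝ) - 1/2) = fun u : ℝ => u - ((k:ℝ) + 1/2) := by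
    funext u; ring
  rw [this, intervalIntegral.integral_sub intervalIntegrable_id intervalIntegrable_const,
    integral_id, intervalIntegral.integral_const]
  simp only [smul_eq_mul]
  ring

/-- For all `n ≥ 1`: `|∫_0^1 ρ(2^n x)(x − m(x)) dx| ≤ 2^{−n}`, where `m` is the
inverse of the Minkowski question mark function and `ρ(x) = {x} − 1/2`. -/
theorem abs_integral_rho_le (n : ℕ) (hn : 1 ≤ n) :
    |∫ x in (0 : ℝ)..1, rho (2 ^ n * x) * (x - minkowskiInv x)| ≤ 1 / 2 ^ n := by
  set N : ℝ := 2 ^ n with hNdef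
  have hN : (0:ℝ) < N := by positivity
  have hNne : N ≠ 0 := hN.ne'
  set g : ℝ → ℝ := fun x => rho (N * x) * (x - minkowskiInv x) with hgdef
  set a : ℕ → ℝ := fun k => (k:ℝ) / N with hadef
  have hcast : ((2^n : ℕ) : ℝ) = N := by push_cast; rfl
  have ha0 : a 0 = 0 := by simp [hadef]
  have haN : a (2^n) = 1 := by
    simp only [hadef, hcast]
    field_simp
  have hstep : ∀ k : ℕ, a (k+1) - a k = 1 / N := by
    intro k
    simp only [hadef]
    push_cast
    ring
  have hmono : ∀ k : ℕ, a k ≤ a (k+1) := by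
    intro k
    have := hstep k
    have : (0:ℝ) < 1 / N := by positivity
    linarith [hstep k]
  have hbound : ∀ k : ℕ, k < 2^n → ∀ x ∈ Set.uIoc (a k) (a (k+1)), 0 ≤ x ∧ x ≤ 1 := by
    intro k hk x hx
    rw [Set.uIoc_of_le (hmono k)] at hx
    have hk1 : ((k:ℝ)+1) ≤ ((2^n : ℕ) : ℝ) := by exact_mod_cast hk
    have hak : 0 ≤ a k := by positivity
    have hak1 : a (k+1) ≤ 1 := by
      simp only [hadef]
      rw [div_le_one hN]
      push_cast
      rw [hcast] at hk1
      linarith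
    exact ⟨hak.trans hx.1.le, hx.2.trans hak1⟩
  have hgmeas : Measurable g :=
    (rho_meas.comp (measurable_const_mul N)).mul (measurable_id.sub mink_mono.measurable)
  have habs_fm : ∀ x : ℝ, 0 ≤ x → x ≤ 1 → |x - minkowskiInv x| ≤ 1 := by
    intro x h0 h1
    rw [abs_sub_le_iff]
    constructor <;> linarith [mink_nonneg x, mink_le_one x]
  have hint : ∀ k < 2^n, IntervalIntegrable g volume (a k) (a (k+1)) := by
    intro k hk
    apply intervalIntegrable_of_bounded hgmeas (C := 1/2)
    intro x hx
    obtain ⟨h0, h1⟩ := hbound k hk x hx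
    calc |g x| = |rho (N*x)| * |x - minkowskiInv x| := abs_mul _ _
      _ ≤ (1/2) * 1 :=
        mul_le_mul (abs_rho_le _) (habs_fm x h0 h1) (abs_nonneg _) (by norm_num)
      _ = 1/2 := by ring
  -- split the integral
  have hsplit : ∫ x in (0:ℝ)..1, g x
      = ∑ k ∈ Finset.range (2^n), ∫ x in (a k)..(a (k+1)), g x := by
    rw [intervalIntegral.sum_integral_adjacent_intervals hint, ha0, haN]
  -- per-piece estimate
  have hpiece : ∀ k < 2^n, |∫ x in (a k)..(a (k+1)), g x|
      ≤ 1/(2*N*N) + (minkowskiInv (a (k+1)) - minkowskiInv (a k)) / (2*N) := by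
    intro k hk
    set A := a k
    set B := a (k+1)
    set c : ℝ := A - minkowskiInv A with hcdef
    have hAB : A ≤ B := hmono k
    have hBA : B - A = 1/N := hstep k
    -- the rho factor integrates to zero
    have hNA : N * A = (k:ℝ) := by
      simp only [A, hadef]; field_simp
    have hNB : N * B = (k:ℝ) + 1 := by
      simp only [B, hadef]; push_cast; field_simp
    have hzero : ∫ x in A..B, rho (N * x) = 0 := by
      rw [intervalIntegral.integral_comp_mul_left rho hNne, hNA, hNB,
        rho_integral_zero k, smul_zero]
    have hrho_int : IntervalIntegrable (fun x => rho (N * x)) volume A B :=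
      intervalIntegrable_of_bounded (rho_meas.comp (measurable_const_mul N))
        (fun x _ => abs_rho_le _)
    have heq : ∫ x in A..B, g x
        = ∫ x in A..B, rho (N*x) * ((x - minkowskiInv x) - c) := by
      have hfun : (fun x => rho (N*x) * ((x - minkowskiInv x) - c))
          = fun x => g x - c * rho (N*x) := by
        funext x; simp only [hgdef]; ring
      rw [hfun, intervalIntegral.integral_sub (hint k hk) (hrho_int.const_mul c),
        intervalIntegral.integral_const_mul, hzero]
      ring
    have hptwise : ∀ x ∈ Set.uIoc A B,
        ‖rho (N*x) * ((x - minkowskiInv x) - c)‖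
          ≤ 1/2 * (1/N + (minkowskiInv B - minkowskiInv A)) := by
      intro x hx
      rw [Set.uIoc_of_le hAB] at hx
      obtain ⟨hx1, hx2⟩ := hx
      have hmx1 : minkowskiInv A ≤ minkowskiInv x := mink_mono hx1.le
      have hmx2 : minkowskiInv x ≤ minkowskiInv B := mink_mono hx2
      have h2 : |(x - minkowskiInv x) - c|
          ≤ 1/N + (minkowskiInv B - minkowskiInv A) := by
        rw [hcdef, abs_sub_le_iff]
        have hBAle := hBA
        constructor <;> linarith
      rw [Real.norm_eq_abs, abs_mul]
      have := mul_le_mul (abs_rho_le (N*x)) h2 (abs_nonneg _)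
        (by norm_num : (0:ℝ) ≤ 1/2)
      linarith
    have hest := intervalIntegral.norm_integral_le_of_norm_le_const hptwise
    rw [Real.norm_eq_abs] at hest
    have habsBA : |B - A| = 1/N := by rw [hBA]; exact abs_of_pos (by positivity)
    rw [habsBA] at hest
    rw [heq]
    calc |∫ x in A..B, rho (N*x) * ((x - minkowskiInv x) - c)|
        ≤ 1/2 * (1/N + (minkowskiInv B - minkowskiInv A)) * (1/N) := hest
      _ = 1/(2*N*N) + (minkowskiInv B - minkowskiInv A) / (2*N) := by
          field_simp
  -- put it together
  show |∫ x in (0:ℝ)..1, g x| ≤ 1 / N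
  calc |∫ x in (0:ℝ)..1, g x|
      = |∑ k ∈ Finset.range (2^n), ∫ x in (a k)..(a (k+1)), g x| := by rw [hsplit]
    _ ≤ ∑ k ∈ Finset.range (2^n), |∫ x in (a k)..(a (k+1)), g x| :=
        Finset.abs_sum_le_sum_abs _ _
    _ ≤ ∑ k ∈ Finset.range (2^n),
          (1/(2*N*N) + (minkowskiInv (a (k+1)) - minkowskiInv (a k)) / (2*N)) :=
        Finset.sum_le_sum fun k hk => hpiece k (Finset.mem_range.1 hk)
    _ = (2^n : ℕ) • (1/(2*N*N))
        + (minkowskiInv (a (2^n)) - minkowskiInv (a 0)) / (2*N) := by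
        rw [Finset.sum_add_distrib, Finset.sum_const, Finset.card_range, ← Finset.sum_div,
          Finset.sum_range_sub (fun k => minkowskiInv (a k))]
    _ ≤ 1 / N := by
        rw [nsmul_eq_mul, hcast]
        have hm0 : 0 ≤ minkowskiInv (a 0) := mink_nonneg _
        have hm1 : minkowskiInv (a (2^n)) ≤ 1 := mink_le_one _
        have h2N : (0:ℝ) < 2*N := by positivity
        have e1 : N * (1/(2*N*N)) = 1/(2*N) := by field_simp
        have e2 : (1:ℝ)/(2*N) + 1/(2*N) = 1/N := by
          rw [← add_div, show (1:ℝ)+1 = 2 by norm_num,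
            div_mul_cancel_left₀ (two_ne_zero) N, one_div]
        have h3 : (minkowskiInv (a (2^n)) - minkowskiInv (a 0))/(2*N) ≤ 1/(2*N) := by
          gcongr
          linarith
        linarith
end
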